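/- Let p, q be orthogonal projections in M_{2d}(ℂ) each of normalized trace 1/2. Then ℂ^{2d} decomposes as an orthogonal direct sum of d two-dimensional subspaces each invariant under both p and q. -/

import Mathlib

open Module Submodule

variable {E : Type*} [NormedAddCommGroup E] [InnerProductSpace ℂ E]

/-- orthogonal complement of an invariant subspace of a symmetric map is invariant -/
lemma invOrth (T : E →ₗ[ℂ] E) (hT : T.IsSymmetric) (W : Submodule ℂ E)
    (h : ∀ x ∈ W, T x ∈ W) : ∀ x ∈ Wᗮ, T x ∈ Wᗮ := by
  intro x hx
  rw [Submodule.mem_orthogonal] at *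
  intro u hu
  calc inner ℂ u (T x) = inner ℂ (T u) x := (hT u x).symm
  _ = 0 := hx (T u) (h u hu)

lemma restrict_symm (T : E →ₗ[ℂ] E) (hT : T.IsSymmetric) (W : Submodule ℂ E)
    (h : ∀ x ∈ W, T x ∈ W) : (T.restrict h).IsSymmetric := by
  intro x y
  simp only [Submodule.coe_inner, LinearMap.restrict_coe_apply]
  exact hT x y

lemma restrict_idem (T : E →ₗ[ℂ] E) (hT2 : T ∘ₗ T = T) (W : Submodule ℂ E)
    (h : ∀ x ∈ W, T x ∈ W) : (T.restrict h) ∘ₗ (T.restrict h) = T.restrict h := by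
  ext x
  have := LinearMap.ext_iff.mp hT2 (x : E)
  simpa [LinearMap.restrict_coe_apply] using this

lemma lemA [FiniteDimensional ℂ E] [Nontrivial E]
    (T S : E →ₗ[ℂ] E) (hT2 : T ∘ₗ T = T) (hS2 : S ∘ₗ S = S) :
    ∃ W : Submodule ℂ E, 0 < finrank ℂ W ∧ finrank ℂ W ≤ 2 ∧
      (∀ x ∈ W, T x ∈ W) ∧ (∀ x ∈ W, S x ∈ W) := by
  have hT2' : ∀ y, T (T y) = T y := fun y => LinearMap.ext_iff.mp hT2 y
  have hS2' : ∀ y, S (S y) = S y := fun y => LinearMap.ext_iff.mp hS2 y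
  set a : E →ₗ[ℂ] E := T + S - LinearMap.id with ha
  set b : E →ₗ[ℂ] E := T - S with hb
  -- key identities
  have haa : ∀ y, a (a y) = y - b (b y) := by
    intro y
    simp only [ha, hb, LinearMap.sub_apply, LinearMap.add_apply, LinearMap.id_apply,
      map_sub, map_add, hT2', hS2']
    abel
  have hba : ∀ y, b (a y) = - a (b y) := by
    intro y
    simp only [ha, hb, LinearMap.sub_apply, LinearMap.add_apply, LinearMap.id_apply,
      map_sub, map_add, map_neg, hT2', hS2']
    abel
  obtain ⟨μ, hμ⟩ := Module.End.exists_eigenvalue b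
  obtain ⟨x, hxe⟩ := hμ.exists_hasEigenvector
  have hbx : b x = μ • x := hxe.apply_eq_smul
  have hx0 : x ≠ 0 := hxe.right
  set W : Submodule ℂ E := span ℂ {x, a x} with hW
  have hxW : x ∈ W := subset_span (by simp)
  have haxW : a x ∈ W := subset_span (by simp)
  have hbxW : b x ∈ W := by rw [hbx]; exact W.smul_mem _ hxW
  have hbax : b (a x) ∈ W := by
    rw [hba, hbx, map_smul]
    exact W.neg_mem (W.smul_mem _ haxW)
  have haax : a (a x) ∈ W := by
    rw [haa, hbx, map_smul, hbx]
    exact W.sub_mem hxW (W.smul_mem _ (W.smul_mem _ hxW))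
  -- T and S in terms of a, b
  have hTy : ∀ y, T y = (2⁻¹ : ℂ) • (a y + b y + y) := by
    intro y
    simp only [ha, hb, LinearMap.sub_apply, LinearMap.add_apply, LinearMap.id_apply]
    rw [show T y + S y - y + (T y - S y) + y = (2:ℂ) • T y by rw [two_smul]; abel]
    rw [smul_smul]; norm_num
  have hSy : ∀ y, S y = (2⁻¹ : ℂ) • (a y - b y + y) := by
    intro y
    simp only [ha, hb, LinearMap.sub_apply, LinearMap.add_apply, LinearMap.id_apply]
    rw [show T y + S y - y - (T y - S y) + y = (2:ℂ) • S y by rw [two_smul]; abel]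
    rw [smul_smul]; norm_num
  have hinvT : ∀ y ∈ W, T y ∈ W := by
    intro y hy
    have : W ≤ W.comap T := by
      rw [hW, span_le]
      rintro z hz
      rcases hz with rfl | hz
      · simpa [Submodule.mem_comap, hTy] using
          W.smul_mem ((2:ℂ)⁻¹) (W.add_mem (W.add_mem haxW hbxW) hxW)
      · rcases hz with rfl
        simpa [Submodule.mem_comap, hTy] using
          W.smul_mem ((2:ℂ)⁻¹) (W.add_mem (W.add_mem haax hbax) haxW)
    exact this hy
  have hinvS : ∀ y ∈ W, S y ∈ W := by
    intro y hy
    have : W ≤ W.comap S := by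
      rw [hW, span_le]
      rintro z hz
      rcases hz with rfl | hz
      · simpa [Submodule.mem_comap, hSy] using
          W.smul_mem ((2:ℂ)⁻¹) (W.add_mem (W.sub_mem haxW hbxW) hxW)
      · rcases hz with rfl
        simpa [Submodule.mem_comap, hSy] using
          W.smul_mem ((2:ℂ)⁻¹) (W.add_mem (W.sub_mem haax hbax) haxW)
    exact this hy
  refine ⟨W, ?_, ?_, hinvT, hinvS⟩
  · haveI : Nontrivial W := ⟨⟨x, hxW⟩, 0, by simp [hx0]⟩
    exact finrank_pos
  · classical
    refine le_trans (finrank_span_le_card (R := ℂ) ({x, a x} : Set E)) ?_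
    rw [Set.toFinset_insert, Set.toFinset_singleton]
    exact (Finset.card_insert_le _ _).trans (by simp)

/-- lifting invariance through a subtype map -/
lemma lift_inv (T : E →ₗ[ℂ] E) (K : Submodule ℂ E) (hK : ∀ x ∈ K, T x ∈ K)
    (U : Submodule ℂ K) (hU : ∀ x ∈ U, (T.restrict hK) x ∈ U) :
    ∀ x ∈ U.map K.subtype, T x ∈ U.map K.subtype := by
  rintro _ ⟨u, hu, rfl⟩
  refine ⟨(T.restrict hK) u, hU u hu, ?_⟩
  simp [LinearMap.restrict_coe_apply]

lemma lift_orth (K : Submodule ℂ E) (U U' : Submodule ℂ K) (h : U ≤ U'ᗮ) :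
    U.map K.subtype ≤ (U'.map K.subtype)ᗮ := by
  rintro _ ⟨u, hu, rfl⟩
  rw [Submodule.mem_orthogonal]
  rintro _ ⟨v, hv, rfl⟩
  have := (Submodule.mem_orthogonal _ _).mp (h hu) v hv
  simpa [Submodule.coe_inner] using this

lemma lemB : ∀ n : ℕ, ∀ (E : Type) (_ : NormedAddCommGroup E)
    (_ : @InnerProductSpace ℂ E _ _) (_ : FiniteDimensional ℂ E),
    Module.finrank ℂ E = n → Odd n →
    ∀ (T S : E →ₗ[ℂ] E), T.IsSymmetric → S.IsSymmetric → T ∘ₗ T = T → S ∘ₗ S = S →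
    ∃ W : Submodule ℂ E, finrank ℂ W = 1 ∧ (∀ x ∈ W, T x ∈ W) ∧ (∀ x ∈ W, S x ∈ W) := by
  intro n
  induction n using Nat.strong_induction_on with
  | _ n ih =>
    intro E _ _ _ hn hodd T S hT hS hT2 hS2
    haveI : Nontrivial E := by
      apply nontrivial_of_finrank_pos (R := ℂ)
      have : 0 < n := hodd.pos
      omega
    obtain ⟨W, hWpos, hWle, hWT, hWS⟩ := lemA T S hT2 hS2
    rcases (by omega : finrank ℂ W = 1 ∨ finrank ℂ W = 2) with h1 | h2
    · exact ⟨W, h1, hWT, hWS⟩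
    · -- pass to the orthogonal complement
      have hWoT := invOrth T hT W hWT
      have hWoS := invOrth S hS W hWS
      have hrk : finrank ℂ Wᗮ = n - 2 := by
        have := Submodule.finrank_add_finrank_orthogonal (K := W)
        omega
      have hodd' : Odd (n - 2) := by
        obtain ⟨k, rfl⟩ := hodd
        have hk : 1 ≤ k := by
          by_contra hk
          have : k = 0 := by omega
          subst this
          have := Submodule.finrank_le W
          omega
        exact ⟨k - 1, by omega⟩
      have hlt : n - 2 < n := by
        have := Submodule.finrank_le W
        omega
      obtain ⟨U, hU1, hUT, hUS⟩ := ih (n - 2) hlt Wᗮ inferInstance inferInstance inferInstance hrk hodd'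
        (T.restrict hWoT) (S.restrict hWoS)
        (restrict_symm T hT _ hWoT) (restrict_symm S hS _ hWoS)
        (restrict_idem T hT2 _ hWoT) (restrict_idem S hS2 _ hWoS)
      refine ⟨U.map Wᗮ.subtype, ?_, lift_inv T Wᗮ hWoT U hUT, lift_inv S Wᗮ hWoS U hUS⟩
      rw [Submodule.finrank_map_subtype_eq]
      exact hU1

/-- in even (positive) dimension there is a 2-dimensional invariant subspace -/
lemma lemA2 {E : Type} [NormedAddCommGroup E] [InnerProductSpace ℂ E]
    [FiniteDimensional ℂ E] {d : ℕ} (hE : finrank ℂ E = 2 * (d + 1))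
    (T S : E →ₗ[ℂ] E) (hT : T.IsSymmetric) (hS : S.IsSymmetric)
    (hT2 : T ∘ₗ T = T) (hS2 : S ∘ₗ S = S) :
    ∃ W : Submodule ℂ E, finrank ℂ W = 2 ∧ (∀ x ∈ W, T x ∈ W) ∧ (∀ x ∈ W, S x ∈ W) := by
  haveI : Nontrivial E := by
    apply nontrivial_of_finrank_pos (R := ℂ)
    omega
  obtain ⟨W, hWpos, hWle, hWT, hWS⟩ := lemA T S hT2 hS2
  rcases (by omega : finrank ℂ W = 2 ∨ finrank ℂ W = 1) with h2 | h1
  · exact ⟨W, h2, hWT, hWS⟩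
  · have hWoT := invOrth T hT W hWT
    have hWoS := invOrth S hS W hWS
    have hrk : finrank ℂ Wᗮ = 2 * d + 1 := by
      have := Submodule.finrank_add_finrank_orthogonal (K := W)
      omega
    obtain ⟨U, hU1, hUT, hUS⟩ := lemB (2 * d + 1) Wᗮ inferInstance inferInstance inferInstance
      hrk ⟨d, by ring⟩ (T.restrict hWoT) (S.restrict hWoS)
      (restrict_symm T hT _ hWoT) (restrict_symm S hS _ hWoS)
      (restrict_idem T hT2 _ hWoT) (restrict_idem S hS2 _ hWoS)
    set W₁ := U.map Wᗮ.subtype with hW₁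
    have hW₁T := lift_inv T Wᗮ hWoT U hUT
    have hW₁S := lift_inv S Wᗮ hWoS U hUS
    have hW₁le : W₁ ≤ Wᗮ := Submodule.map_subtype_le _ _
    have hdisj : W ⊓ W₁ = ⊥ := (W.orthogonal_disjoint.mono_right hW₁le).eq_bot
    have hW₁rk : finrank ℂ W₁ = 1 := by
      rw [hW₁, Submodule.finrank_map_subtype_eq]; exact hU1
    refine ⟨W ⊔ W₁, ?_, ?_, ?_⟩
    · have := Submodule.finrank_sup_add_finrank_inf_eq W W₁
      rw [hdisj] at this
      simp only [finrank_bot] at this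
      omega
    · intro x hx
      rw [Submodule.mem_sup] at hx ⊢
      obtain ⟨y, hy, z, hz, rfl⟩ := hx
      exact ⟨T y, hWT y hy, T z, hW₁T z hz, (map_add T y z).symm⟩
    · intro x hx
      rw [Submodule.mem_sup] at hx ⊢
      obtain ⟨y, hy, z, hz, rfl⟩ := hx
      exact ⟨S y, hWS y hy, S z, hW₁S z hz, (map_add S y z).symm⟩

lemma lemC : ∀ d : ℕ, ∀ (E : Type) (_ : NormedAddCommGroup E)
    (_ : @InnerProductSpace ℂ E _ _) (_ : FiniteDimensional ℂ E),
    finrank ℂ E = 2 * d →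
    ∀ (T S : E →ₗ[ℂ] E), T.IsSymmetric → S.IsSymmetric → T ∘ₗ T = T → S ∘ₗ S = S →
    ∃ V : Fin d → Submodule ℂ E, (∀ i, finrank ℂ (V i) = 2) ∧
      (∀ i j, i ≠ j → V i ≤ (V j)ᗮ) ∧ (⨆ i, V i) = ⊤ ∧
      (∀ i, ∀ x ∈ V i, T x ∈ V i) ∧ (∀ i, ∀ x ∈ V i, S x ∈ V i) := by
  intro d
  induction d with
  | zero =>
    intro E _ _ _ hE T S hT hS hT2 hS2
    haveI : Subsingleton E := by
      rw [← Module.finrank_zero_iff (R := ℂ)]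
      omega
    exact ⟨Fin.elim0, fun i => i.elim0, fun i => i.elim0, Subsingleton.elim _ _,
      fun i => i.elim0, fun i => i.elim0⟩
  | succ d ih =>
    intro E _ _ _ hE T S hT hS hT2 hS2
    obtain ⟨W, hWrk, hWT, hWS⟩ := lemA2 hE T S hT hS hT2 hS2
    have hWoT := invOrth T hT W hWT
    have hWoS := invOrth S hS W hWS
    have hrk : finrank ℂ Wᗮ = 2 * d := by
      have := Submodule.finrank_add_finrank_orthogonal (K := W)
      omega
    obtain ⟨V', hV'rk, hV'orth, hV'sup, hV'T, hV'S⟩ :=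
      ih Wᗮ inferInstance inferInstance inferInstance hrk
        (T.restrict hWoT) (S.restrict hWoS)
        (restrict_symm T hT _ hWoT) (restrict_symm S hS _ hWoS)
        (restrict_idem T hT2 _ hWoT) (restrict_idem S hS2 _ hWoS)
    set V : Fin (d + 1) → Submodule ℂ E :=
      Fin.cons W (fun i => (V' i).map Wᗮ.subtype) with hV
    have hVle : ∀ i : Fin d, V i.succ ≤ Wᗮ := fun i => by
      rw [hV]; simp only [Fin.cons_succ]; exact Submodule.map_subtype_le _ _
    refine ⟨V, ?_, ?_, ?_, ?_, ?_⟩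
    · intro i
      induction i using Fin.cases with
      | zero => rw [hV]; exact hWrk
      | succ i =>
        have : V i.succ = (V' i).map Wᗮ.subtype := by rw [hV]; simp
        rw [this, Submodule.finrank_map_subtype_eq]; exact hV'rk i
    · intro i j hij
      induction i using Fin.cases with
      | zero =>
        induction j using Fin.cases with
        | zero => exact absurd rfl hij
        | succ j =>
          have h1 : V j.succ ≤ Wᗮ := hVle j
          have h2 : Wᗮᗮ ≤ (V j.succ)ᗮ := Submodule.orthogonal_le h1
          rw [Submodule.orthogonal_orthogonal] at h2
          simpa [hV] using h2
      | succ i =>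
        induction j using Fin.cases with
        | zero =>
          have := hVle i
          simpa [hV] using this
        | succ j =>
          have hij' : i ≠ j := fun h => hij (by rw [h])
          have := lift_orth Wᗮ (V' i) (V' j) (hV'orth i j hij')
          simpa [hV, Fin.cons_succ] using this
    · have hsup : (⨆ i, V i) = W ⊔ ⨆ i : Fin d, (V' i).map Wᗮ.subtype := by
        apply le_antisymm
        · refine iSup_le ?_
          intro i
          induction i using Fin.cases with
          | zero => simp [hV]
          | succ i => exact le_sup_of_le_right (by simpa [hV] using le_iSup (fun i => (V' i).map Wᗮ.subtype) i)
        · refine sup_le (le_iSup_of_le 0 (by simp [hV])) (iSup_le fun i => le_iSup_of_le i.succ (by simp [hV]))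
      rw [hsup, ← Submodule.map_iSup, hV'sup, Submodule.map_subtype_top,
        Submodule.sup_orthogonal_of_hasOrthogonalProjection]
    · intro i
      induction i using Fin.cases with
      | zero => simpa [hV] using hWT
      | succ i => simpa [hV] using lift_inv T Wᗮ hWoT (V' i) (hV'T i)
    · intro i
      induction i using Fin.cases with
      | zero => simpa [hV] using hWS
      | succ i => simpa [hV] using lift_inv S Wᗮ hWoS (V' i) (hV'S i)

open Matrix

theorem stmt_14 (d : ℕ) (hd : 0 < d)
    (p q : Matrix (Fin (2*d)) (Fin (2*d)) ℂ)
    (hp : p.IsHermitian) (hp2 : p * p = p)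
    (hq : q.IsHermitian) (hq2 : q * q = q)
    (htp : p.trace = (d : ℂ)) (htq : q.trace = (d : ℂ)) :
    ∃ V : Fin d → Submodule ℂ (EuclideanSpace ℂ (Fin (2*d))),
      (∀ i, Module.finrank ℂ (V i) = 2) ∧
      (∀ i j, i ≠ j → V i ≤ (V j)ᗮ) ∧
      (⨆ i, V i) = ⊤ ∧
      (∀ i, ∀ x ∈ V i, Matrix.toEuclideanLin p x ∈ V i) ∧
      (∀ i, ∀ x ∈ V i, Matrix.toEuclideanLin q x ∈ V i) := by
  have hmul : ∀ (m m' : Matrix (Fin (2*d)) (Fin (2*d)) ℂ),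
      toEuclideanLin (m * m') = toEuclideanLin m ∘ₗ toEuclideanLin m' := by
    intro m m'
    rw [Matrix.toEuclideanLin_eq_toLin]
    exact Matrix.toLin_mul _ _ _ m m'
  have hT2 : toEuclideanLin p ∘ₗ toEuclideanLin p = toEuclideanLin p := by
    rw [← hmul, hp2]
  have hS2 : toEuclideanLin q ∘ₗ toEuclideanLin q = toEuclideanLin q := by
    rw [← hmul, hq2]
  exact lemC d (EuclideanSpace ℂ (Fin (2*d))) inferInstance inferInstance inferInstance
    (by simp) (toEuclideanLin p) (toEuclideanLin q)
    (Matrix.isHermitian_iff_isSymmetric.mp hp) (Matrix.isHermitian_iff_isSymmetric.mp hq)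
    hT2 hS2
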